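/- The Jacobi theta function satisfies the Jacobi triple product identity: Σ_{n∈1/2+ℤ} e^{πin²τ + 2πin(w+1/2)} = -i q^{1/8} ζ^{-1/2} ∏_{n≥1} (1-q^n)(1-ζ q^{n-1})(1-ζ^{-1} q^n), where q = e^{2πiτ}, ζ = e^{2πiw}, and τ is in the upper half-plane. -/

import Mathlib

open Complex

open Finset Filter Topology

namespace JTP

noncomputable def G (p : ℂ) : ℕ → ℕ → ℂ
  | _, 0 => 1
  | 0, _+1 => 0
  | m+1, k+1 => G p m (k+1) + p ^ (2*(m-k)) * G p m k

variable (p : ℂ)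

lemma G_zero : ∀ m k, m < k → G p m k = 0 := by
  intro m
  induction m with
  | zero => rintro (_|k) h; · omega
            rfl
  | succ m ih =>
    rintro (_|k) h
    · omega
    · show G p m (k+1) + p ^ (2*(m-k)) * G p m k = 0
      rw [ih (k+1) (by omega), ih k (by omega)]
      ring

lemma gauss (m : ℕ) (z : ℂ) :
    ∏ j ∈ range m, (1 + z * p ^ (2*j)) =
      ∑ k ∈ range (m+1), G p m k * p ^ (k*(k-1)) * z ^ k := by
  induction m with
  | zero => simp [G]
  | succ m ih =>
    rw [prod_range_succ, ih]
    rw [Finset.sum_range_succ' (fun k => G p (m+1) k * p ^ (k*(k-1)) * z ^ k) (m+1)]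
    have h0 : G p (m+1) 0 * p ^ (0*(0-1)) * z ^ 0 = 1 := by simp [G]
    rw [h0]
    have hrec : ∀ k ∈ range (m+1),
        G p (m+1) (k+1) * p ^ ((k+1)*(k+1-1)) * z ^ (k+1)
          = G p m (k+1) * p ^ ((k+1)*((k+1)-1)) * z ^ (k+1)
            + (G p m k * p ^ (k*(k-1)) * z ^ k) * (z * p ^ (2*m)) := by
      intro k hk
      simp only [mem_range] at hk
      show (G p m (k+1) + p ^ (2*(m-k)) * G p m k) * p ^ ((k+1)*(k+1-1)) * z ^ (k+1) = _
      have he : p ^ (2*(m-k)) * p ^ ((k+1)*(k+1-1)) = p ^ (2*m) * p ^ (k*(k-1)) := by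
        rw [← pow_add, ← pow_add]
        congr 1
        obtain ⟨d, rfl⟩ : ∃ d, m = k + d := ⟨m - k, by omega⟩
        have h1 : k + d - k = d := by omega
        rw [h1]
        cases k with
        | zero => simp
        | succ j =>
          have h2 : j + 1 + 1 - 1 = j + 1 := by omega
          have h3 : j + 1 - 1 = j := by omega
          rw [h2, h3]; ring
      calc (G p m (k+1) + p ^ (2*(m-k)) * G p m k) * p ^ ((k+1)*(k+1-1)) * z ^ (k+1)
          = G p m (k+1) * p ^ ((k+1)*(k+1-1)) * z ^ (k+1)
            + (p ^ (2*(m-k)) * p ^ ((k+1)*(k+1-1))) * G p m k * z ^ (k+1) := by ring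
        _ = _ := by rw [he]; ring
    rw [Finset.sum_congr rfl hrec, Finset.sum_add_distrib, ← Finset.sum_mul]
    have hfirst : (1 : ℂ) + ∑ k ∈ range (m+1), G p m (k+1) * p ^ ((k+1)*((k+1)-1)) * z ^ (k+1)
        = ∑ k ∈ range (m+1), G p m k * p ^ (k*(k-1)) * z ^ k := by
      rw [Finset.sum_range_succ (fun k => G p m (k+1) * p ^ ((k+1)*((k+1)-1)) * z ^ (k+1)) m,
        G_zero p m (m+1) (by omega)]
      rw [Finset.sum_range_succ' (fun k => G p m k * p ^ (k*(k-1)) * z ^ k) m]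
      simp [G]
      ring
    calc (∑ k ∈ range (m+1), G p m k * p ^ (k*(k-1)) * z ^ k) * (1 + z * p ^ (2*m))
        = (1 + ∑ k ∈ range (m+1), G p m (k+1) * p ^ ((k+1)*((k+1)-1)) * z ^ (k+1))
          + (∑ k ∈ range (m+1), G p m k * p ^ (k*(k-1)) * z ^ k) * (z * p ^ (2*m)) := by
          rw [hfirst]; ring
      _ = _ := by ring

noncomputable def D (p : ℂ) (m : ℕ) : ℂ := ∏ i ∈ range m, (1 - p ^ (2*i+2))

lemma D_succ (m : ℕ) : D p (m+1) = D p m * (1 - p ^ (2*m+2)) := prod_range_succ _ _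

lemma G_mul : ∀ m k, k ≤ m → G p m k * (D p (m-k) * D p k) = D p m := by
  intro m
  induction m with
  | zero =>
    intro k hk
    interval_cases k
    simp [G, D]
  | succ m ih =>
    rintro (_|k) hk
    · show (1 : ℂ) * (D p (m+1-0) * D p 0) = D p (m+1)
      simp [D]
    · show (G p m (k+1) + p ^ (2*(m-k)) * G p m k) * (D p (m+1-(k+1)) * D p (k+1)) = D p (m+1)
      have hmk : m + 1 - (k+1) = m - k := by omega
      rw [hmk]
      rcases Nat.lt_or_ge m (k+1) with hkm | hkm
      · -- k = m
        have hk1 : k = m := by omega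
        subst hk1
        rw [G_zero p k (k+1) (by omega)]
        have h0 : k - k = 0 := by omega
        rw [h0]
        have := ih k le_rfl
        rw [h0] at this
        calc (0 + p ^ (2*0) * G p k k) * (D p 0 * D p (k+1))
            = (G p k k * (D p 0 * D p k)) * (1 - p ^ (2*k+2)) := by
              rw [D_succ]; simp [D]; ring
          _ = D p k * (1 - p ^ (2*k+2)) := by rw [this]
          _ = D p (k+1) := (D_succ p k).symm
      · -- k + 1 ≤ m
        have h1 : m - k = (m - (k+1)) + 1 := by omega
        have ih1 := ih (k+1) hkm
        have ih2 := ih k (by omega)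
        have h2 : D p (m-k) = D p (m-(k+1)) * (1 - p ^ (2*(m-(k+1))+2)) := by
          rw [h1, D_succ]
        have h3 : 2*(m-(k+1))+2 = 2*(m-k) := by omega
        have h4 : D p (k+1) = D p k * (1 - p ^ (2*k+2)) := D_succ p k
        have h5 : p ^ (2*(m-k)) * p ^ (2*k+2) = p ^ (2*m+2) := by
          rw [← pow_add]; congr 1; omega
        calc (G p m (k+1) + p ^ (2*(m-k)) * G p m k) * (D p (m-k) * D p (k+1))
            = (G p m (k+1) * (D p (m-(k+1)) * D p (k+1))) * (1 - p ^ (2*(m-k)))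
              + (p ^ (2*(m-k)) * (1 - p ^ (2*k+2))) * (G p m k * (D p (m-k) * D p k)) := by
                rw [h2, h3, h4]; ring
          _ = D p m * (1 - p ^ (2*(m-k))) + (p ^ (2*(m-k)) * (1 - p ^ (2*k+2))) * D p m := by
                rw [ih1, ih2]
          _ = D p m * (1 - p ^ (2*m+2)) := by rw [← h5]; ring
          _ = D p (m+1) := (D_succ p m).symm

lemma hasProd_zero_of_eq_zero {f : ℕ → ℂ} (n0 : ℕ) (h : f n0 = 0) : HasProd f 0 := by
  have hev : ∀ᶠ s : Finset ℕ in atTop, ∏ i ∈ s, f i = 0 := by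
    filter_upwards [eventually_ge_atTop ({n0} : Finset ℕ)] with s hs
    exact Finset.prod_eq_zero (by simpa using hs) h
  exact Tendsto.congr' (by filter_upwards [hev] with s hs; exact hs.symm) tendsto_const_nhds

lemma summable_log_one_add (c q : ℂ) (hq : ‖q‖ < 1) (h : ∀ n : ℕ, 1 + c * q ^ n ≠ 0) :
    Summable fun n : ℕ => Complex.log (1 + c * q ^ n) := by
  have htend : Tendsto (fun n : ℕ => ‖c‖ * ‖q‖ ^ n) atTop (𝓝 (‖c‖ * 0)) :=
    (tendsto_pow_atTop_nhds_zero_of_lt_one (norm_nonneg q) hq).const_mul ‖c‖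
  rw [mul_zero] at htend
  have hev : ∀ᶠ n : ℕ in atTop, ‖c‖ * ‖q‖ ^ n ≤ 1/2 :=
    htend.eventually_le_const (by norm_num)
  apply Summable.of_norm_bounded_eventually (g := fun n => 3/2 * (‖c‖ * ‖q‖ ^ n))
  · exact ((summable_geometric_of_lt_one (norm_nonneg q) hq).mul_left ‖c‖).mul_left _
  · rw [Nat.cofinite_eq_atTop]
    filter_upwards [hev] with n hn
    have hsmall : ‖c * q ^ n‖ ≤ 1/2 := by rwa [norm_mul, norm_pow]
    have := Complex.norm_log_one_add_half_le_self hsmall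
    calc ‖Complex.log (1 + c * q ^ n)‖ ≤ 3/2 * ‖c * q ^ n‖ := this
      _ = 3/2 * (‖c‖ * ‖q‖ ^ n) := by rw [norm_mul, norm_pow]

lemma multipliable_one_add (c q : ℂ) (hq : ‖q‖ < 1) :
    Multipliable fun n : ℕ => 1 + c * q ^ n := by
  by_cases h : ∀ n : ℕ, 1 + c * q ^ n ≠ 0
  · exact Complex.multipliable_of_summable_log (summable_log_one_add c q hq h)
  · push_neg at h
    obtain ⟨n0, h0⟩ := h
    exact ⟨0, hasProd_zero_of_eq_zero n0 h0⟩

lemma tprod_one_add_ne_zero (c q : ℂ) (hq : ‖q‖ < 1) (h : ∀ n : ℕ, 1 + c * q ^ n ≠ 0) :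
    (∏' n : ℕ, (1 + c * q ^ n)) ≠ 0 := by
  have := Complex.cexp_tsum_eq_tprod (f := fun n : ℕ => 1 + c * q ^ n)
      h (summable_log_one_add c q hq h)
  rw [← this]
  exact Complex.exp_ne_zero _

lemma one_sub_sum_le_prod (a : ℕ → ℝ) (h0 : ∀ i, 0 ≤ a i) (h1 : ∀ i, a i ≤ 1) (t : ℕ) :
    1 - ∑ i ∈ range t, a i ≤ ∏ i ∈ range t, (1 - a i) := by
  induction t with
  | zero => simp
  | succ t ih =>
    rw [prod_range_succ, sum_range_succ]
    have hS : 0 ≤ ∑ i ∈ range t, a i := Finset.sum_nonneg fun i _ => h0 i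
    have hat : 0 ≤ 1 - a t := by linarith [h1 t]
    nlinarith [mul_nonneg (sub_nonneg.2 ih) hat, mul_nonneg hS (h0 t)]

lemma geom_partial_le (r : ℝ) (h0 : 0 ≤ r) (h1 : r < 1) (t : ℕ) :
    ∑ i ∈ range t, r ^ i ≤ (1 - r)⁻¹ := by
  have hs := summable_geometric_of_lt_one h0 h1
  calc ∑ i ∈ range t, r ^ i ≤ ∑' i : ℕ, r ^ i :=
        hs.sum_le_tsum (range t) (fun i _ => pow_nonneg h0 i)
    _ = (1 - r)⁻¹ := tsum_geometric_of_lt_one h0 h1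

lemma Dr_lower (hp : ‖p‖ < 1) :
    ∃ L : ℝ, 0 < L ∧ ∀ m, L ≤ ∏ i ∈ range m, (1 - ‖p‖ ^ (2*i+2)) := by
  set r := ‖p‖ with hr
  have h0 : 0 ≤ r := norm_nonneg p
  have hfac : ∀ i : ℕ, 0 < 1 - r ^ (2*i+2) := fun i => by
    have := pow_lt_one₀ h0 hp (n := 2*i+2) (by omega)
    linarith
  obtain ⟨K, hK⟩ : ∃ K : ℕ, r ^ K ≤ (1 - r)/2 := by
    have := (tendsto_pow_atTop_nhds_zero_of_lt_one h0 hp).eventually_le_const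
      (show (0:ℝ) < (1-r)/2 by linarith)
    exact this.exists
  have hDrK : 0 < ∏ i ∈ range K, (1 - r ^ (2*i+2)) :=
    Finset.prod_pos fun i _ => hfac i
  refine ⟨(∏ i ∈ range K, (1 - r ^ (2*i+2))) * (1/2), by positivity, fun m => ?_⟩
  rcases le_or_gt m K with hm | hm
  · have hsplit : (∏ i ∈ range K, (1 - r ^ (2*i+2)))
        = (∏ i ∈ range m, (1 - r ^ (2*i+2))) * ∏ i ∈ range (K - m), (1 - r ^ (2*(m+i)+2)) := by
      have he : m + (K - m) = K := by omega
      rw [← he, Finset.prod_range_add (fun i => 1 - r ^ (2*i+2)) m (K - m)]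
      simp [Nat.add_sub_cancel_left]
    have hextra : ∏ i ∈ range (K - m), (1 - r ^ (2*(m+i)+2)) ≤ 1 :=
      Finset.prod_le_one (fun i _ => (hfac (m+i)).le) (fun i _ => by
        have := pow_nonneg h0 (2*(m+i)+2); linarith)
    have hDm : 0 < ∏ i ∈ range m, (1 - r ^ (2*i+2)) := Finset.prod_pos fun i _ => hfac i
    nlinarith [hsplit, hextra, hDm]
  · have hsplit : (∏ i ∈ range m, (1 - r ^ (2*i+2)))
        = (∏ i ∈ range K, (1 - r ^ (2*i+2))) * ∏ i ∈ range (m - K), (1 - r ^ (2*(K+i)+2)) := by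
      have he : K + (m - K) = m := by omega
      rw [← he, Finset.prod_range_add (fun i => 1 - r ^ (2*i+2)) K (m - K)]
      simp [Nat.add_sub_cancel_left]
    have htail : (1:ℝ)/2 ≤ ∏ i ∈ range (m - K), (1 - r ^ (2*(K+i)+2)) := by
      have hW := one_sub_sum_le_prod (fun i => r ^ (2*(K+i)+2))
        (fun i => pow_nonneg h0 _) (fun i => (pow_lt_one₀ h0 hp (by omega)).le) (m - K)
      have hsum : ∑ i ∈ range (m - K), r ^ (2*(K+i)+2) ≤ 1/2 := by
        have hterm : ∀ i ∈ range (m - K), r ^ (2*(K+i)+2) ≤ r ^ K * r ^ i := by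
          intro i _
          rw [← pow_add]
          exact pow_le_pow_of_le_one h0 hp.le (by omega)
        calc ∑ i ∈ range (m - K), r ^ (2*(K+i)+2) ≤ ∑ i ∈ range (m - K), r ^ K * r ^ i :=
              Finset.sum_le_sum hterm
          _ = r ^ K * ∑ i ∈ range (m - K), r ^ i := by rw [Finset.mul_sum]
          _ ≤ ((1 - r)/2) * (1 - r)⁻¹ := by
              apply mul_le_mul hK (geom_partial_le r h0 hp _)
                (Finset.sum_nonneg fun i _ => pow_nonneg h0 i) (by linarith)
          _ = 1/2 := by
              have hne : (1 - r) ≠ 0 := by linarith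
              rw [div_mul_eq_mul_div, mul_inv_cancel₀ hne]
      linarith
    calc (∏ i ∈ range K, (1 - r ^ (2*i+2))) * (1/2)
        ≤ (∏ i ∈ range K, (1 - r ^ (2*i+2))) * ∏ i ∈ range (m - K), (1 - r ^ (2*(K+i)+2)) := by
          apply mul_le_mul_of_nonneg_left htail hDrK.le
      _ = _ := hsplit.symm

lemma norm_D_lower (hp : ‖p‖ < 1) (m : ℕ) :
    ∏ i ∈ range m, (1 - ‖p‖ ^ (2*i+2)) ≤ ‖D p m‖ := by
  rw [D, norm_prod]
  apply Finset.prod_le_prod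
  · intro i _
    have := pow_lt_one₀ (norm_nonneg p) hp (n := 2*i+2) (by omega)
    linarith
  · intro i _
    calc 1 - ‖p‖ ^ (2*i+2) = ‖(1:ℂ)‖ - ‖p ^ (2*i+2)‖ := by rw [norm_one, norm_pow]
      _ ≤ ‖1 - p ^ (2*i+2)‖ := norm_sub_norm_le _ _

lemma norm_D_upper (hp : ‖p‖ < 1) (m : ℕ) :
    ‖D p m‖ ≤ Real.exp ((1 - ‖p‖)⁻¹) := by
  set r := ‖p‖ with hr
  have h0 : 0 ≤ r := norm_nonneg p
  rw [D, norm_prod]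
  calc ∏ i ∈ range m, ‖1 - p ^ (2*i+2)‖ ≤ ∏ i ∈ range m, Real.exp (r ^ (2*i+2)) := by
        apply Finset.prod_le_prod (fun i _ => norm_nonneg _)
        intro i _
        calc ‖1 - p ^ (2*i+2)‖ ≤ ‖(1:ℂ)‖ + ‖p ^ (2*i+2)‖ := norm_sub_le _ _
          _ = 1 + r ^ (2*i+2) := by rw [norm_one, norm_pow]
          _ ≤ Real.exp (r ^ (2*i+2)) := by
              have := Real.add_one_le_exp (r ^ (2*i+2)); linarith
    _ = Real.exp (∑ i ∈ range m, r ^ (2*i+2)) := (Real.exp_sum _ _).symm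
    _ ≤ Real.exp ((1 - r)⁻¹) := by
        apply Real.exp_le_exp.mpr
        calc ∑ i ∈ range m, r ^ (2*i+2) ≤ ∑ i ∈ range m, r ^ i :=
              Finset.sum_le_sum fun i _ => pow_le_pow_of_le_one h0 hp.le (by omega)
          _ ≤ (1 - r)⁻¹ := geom_partial_le r h0 hp _

lemma D_ne_zero (hp : ‖p‖ < 1) (m : ℕ) : D p m ≠ 0 := by
  obtain ⟨L, hL, hLle⟩ := Dr_lower p hp
  have := lt_of_lt_of_le hL ((hLle m).trans (norm_D_lower p hp m))
  exact fun h => by simp [h] at this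

lemma G_bound (hp : ‖p‖ < 1) : ∃ M : ℝ, 0 < M ∧ ∀ m k, ‖G p m k‖ ≤ M := by
  obtain ⟨L, hL, hLle⟩ := Dr_lower p hp
  refine ⟨Real.exp ((1 - ‖p‖)⁻¹) / (L * L), by positivity, fun m k => ?_⟩
  rcases le_or_gt k m with hk | hk
  · have key := congrArg norm (G_mul p m k hk)
    rw [norm_mul, norm_mul] at key
    have h1 : L ≤ ‖D p (m - k)‖ := (hLle _).trans (norm_D_lower p hp _)
    have h2 : L ≤ ‖D p k‖ := (hLle _).trans (norm_D_lower p hp _)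
    have h3 : ‖D p m‖ ≤ Real.exp ((1 - ‖p‖)⁻¹) := norm_D_upper p hp m
    rw [le_div_iff₀ (by positivity)]
    calc ‖G p m k‖ * (L * L) ≤ ‖G p m k‖ * (‖D p (m-k)‖ * ‖D p k‖) := by
          apply mul_le_mul_of_nonneg_left _ (norm_nonneg _)
          exact mul_le_mul h1 h2 hL.le (norm_nonneg _)
      _ = ‖D p m‖ := key
      _ ≤ _ := h3
  · rw [G_zero p m k hk]
    simp
    positivity

noncomputable def Fn (p x : ℂ) (N : ℕ) (n : ℤ) : ℂ :=
  (if 0 ≤ (N:ℤ) + n then G p (2*N) (((N:ℤ) + n).toNat) else 0) * x ^ n * p ^ (n^2 + n)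

lemma prod_zpow_eq (hp0 : p ≠ 0) (g : ℕ → ℤ) (N : ℕ) :
    ∏ j ∈ range N, p ^ g j = p ^ (∑ j ∈ range N, g j) := by
  induction N with
  | zero => simp
  | succ N ih => rw [prod_range_succ, sum_range_succ, ih, zpow_add₀ hp0]

lemma sum_neg_two (N : ℕ) : ∑ j ∈ range N, (-2*(j:ℤ)) = (N:ℤ) - (N:ℤ)^2 := by
  induction N with
  | zero => simp
  | succ N ih => rw [sum_range_succ, ih]; push_cast; ring

lemma finite_id (hp0 : p ≠ 0) {x : ℂ} (hx : x ≠ 0) (N : ℕ) :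
    ∑' n : ℤ, Fn p x N n =
      (∏ j ∈ range N, (1 + x * p ^ (2*j+2))) * (∏ j ∈ range N, (1 + x⁻¹ * p ^ (2*j))) := by
  -- Step 1 : tsum is a finite sum
  have h1 : ∑' n : ℤ, Fn p x N n = ∑ n ∈ Finset.Icc (-(N:ℤ)) (N:ℤ), Fn p x N n := by
    apply tsum_eq_sum
    intro b hb
    simp only [Finset.mem_Icc, not_and_or, not_le] at hb
    unfold Fn
    rcases hb with hb | hb
    · rw [if_neg (by omega)]; ring
    · rw [if_pos (by omega), G_zero p _ _ (by omega)]; ring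
  -- Step 2 : reindex by k = n + N
  have h2 : ∑ n ∈ Finset.Icc (-(N:ℤ)) (N:ℤ), Fn p x N n
      = ∑ k ∈ range (2*N+1),
          G p (2*N) k * x ^ ((k:ℤ) - N) * p ^ (((k:ℤ)-N)^2 + ((k:ℤ)-N)) := by
    apply Finset.sum_nbij' (i := fun n : ℤ => ((N:ℤ) + n).toNat) (j := fun k : ℕ => (k:ℤ) - N)
    · intro a ha; simp only [Finset.mem_Icc] at ha; simp only [mem_range]; omega
    · intro a ha; simp only [mem_range] at ha; simp only [Finset.mem_Icc]; omega
    · intro a ha; simp only [Finset.mem_Icc] at ha; omega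
    · intro a ha; simp only [mem_range] at ha; omega
    · intro a ha
      simp only [Finset.mem_Icc] at ha
      unfold Fn
      rw [if_pos (by omega)]
      have hc : ((((N:ℤ) + a).toNat : ℤ)) = N + a := by omega
      rw [hc]
      have hc2 : (N:ℤ) + a - N = a := by ring
      rw [hc2]
  -- Step 3 : Gauss's identity with z = x * p^(2-2N)
  set z : ℂ := x * p ^ (2 - 2*(N:ℤ)) with hz
  have h3 := gauss p (2*N) z
  -- rewrite the Gauss sum
  have h4 : ∑ k ∈ range (2*N+1), G p (2*N) k * p ^ (k*(k-1)) * z ^ k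
      = x ^ (N:ℕ) * p ^ ((N:ℤ) - (N:ℤ)^2) *
        ∑ k ∈ range (2*N+1),
          G p (2*N) k * x ^ ((k:ℤ) - N) * p ^ (((k:ℤ)-N)^2 + ((k:ℤ)-N)) := by
    rw [Finset.mul_sum]
    apply Finset.sum_congr rfl
    intro k hk
    simp only [mem_range] at hk
    have e1 : z ^ k = x ^ (k:ℤ) * p ^ ((2 - 2*(N:ℤ)) * k) := by
      rw [hz, mul_pow, ← zpow_natCast x k, ← zpow_natCast (p ^ (2 - 2*(N:ℤ))) k, ← zpow_mul]
    have e2 : x ^ ((N:ℕ):ℤ) * x ^ ((k:ℤ) - N) = x ^ ((k:ℤ)) := by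
      rw [← zpow_add₀ hx]; congr 1; push_cast; ring
    have hpe : (↑(k*(k-1)) : ℤ) + (2 - 2*(N:ℤ)) * k
        = ((N:ℤ) - (N:ℤ)^2) + ((((k:ℤ)-N)^2 + ((k:ℤ)-N))) := by
      have hkk : (↑(k*(k-1)) : ℤ) = (k:ℤ) * ((k:ℤ) - 1) := by
        cases k with
        | zero => simp
        | succ j => push_cast [Nat.succ_sub_one]; ring
      rw [hkk]; ring
    rw [e1, ← zpow_natCast p (k*(k-1))]
    calc G p (2*N) k * p ^ ((k*(k-1) : ℕ) : ℤ) * (x ^ (k:ℤ) * p ^ ((2 - 2*(N:ℤ)) * k))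
        = G p (2*N) k * x ^ (k:ℤ) * (p ^ ((k*(k-1) : ℕ) : ℤ) * p ^ ((2 - 2*(N:ℤ)) * k)) := by
          ring
      _ = G p (2*N) k * x ^ (k:ℤ) * p ^ ((((k*(k-1) : ℕ)) : ℤ) + (2 - 2*(N:ℤ)) * k) := by
          rw [zpow_add₀ hp0]
      _ = G p (2*N) k * (x ^ ((N:ℕ):ℤ) * x ^ ((k:ℤ) - N))
          * p ^ (((N:ℤ) - (N:ℤ)^2) + ((((k:ℤ)-N)^2 + ((k:ℤ)-N)))) := by
          rw [e2, hpe]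
      _ = _ := by rw [zpow_add₀ hp0, zpow_natCast]; ring
  -- Step 4 : split the Gauss product
  have h5 : ∏ j ∈ range (2*N), (1 + z * p ^ (2*j))
      = (∏ j ∈ range N, (1 + z * p ^ (2*j))) * ∏ j ∈ range N, (1 + x * p ^ (2*j+2)) := by
    rw [two_mul, Finset.prod_range_add]
    congr 1
    apply Finset.prod_congr rfl
    intro j _
    congr 1
    rw [hz, mul_assoc, ← zpow_natCast p (2*(N+j)), ← zpow_add₀ hp0, ← zpow_natCast p (2*j+2)]
    congr 2
    push_cast; ring
  have h6 : ∏ j ∈ range N, (1 + z * p ^ (2*j))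
      = x ^ (N:ℕ) * p ^ ((N:ℤ) - (N:ℤ)^2) * ∏ j ∈ range N, (1 + x⁻¹ * p ^ (2*j)) := by
    rw [← Finset.prod_range_reflect (fun j => 1 + z * p ^ (2*j)) N]
    have hterm : ∀ j ∈ range N,
        1 + z * p ^ (2*(N - 1 - j)) = (x * p ^ (-2*(j:ℤ))) * (1 + x⁻¹ * p ^ (2*j)) := by
      intro j hj
      simp only [mem_range] at hj
      have hzp : z * p ^ (2*(N-1-j)) = x * p ^ (-2*(j:ℤ)) := by
        rw [hz, mul_assoc, ← zpow_natCast p (2*(N-1-j)), ← zpow_add₀ hp0]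
        congr 2
        omega
      rw [hzp, mul_add, mul_one]
      have : x * p ^ (-2*(j:ℤ)) * (x⁻¹ * p ^ (2*j))
          = (x * x⁻¹) * (p ^ (-2*(j:ℤ)) * p ^ ((2*j : ℕ) : ℤ)) := by
        rw [zpow_natCast]; ring
      rw [this, mul_inv_cancel₀ hx, ← zpow_add₀ hp0]
      have he : -2*(j:ℤ) + ((2*j : ℕ) : ℤ) = 0 := by push_cast; ring
      rw [he, zpow_zero]
      ring
    rw [Finset.prod_congr rfl hterm, Finset.prod_mul_distrib, Finset.prod_mul_distrib,
      Finset.prod_const, prod_zpow_eq p hp0, sum_neg_two, Finset.card_range]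
  -- Assemble
  rw [h1, h2]
  have hmain : x ^ (N:ℕ) * p ^ ((N:ℤ) - (N:ℤ)^2) *
      (∑ k ∈ range (2*N+1), G p (2*N) k * x ^ ((k:ℤ) - N) * p ^ (((k:ℤ)-N)^2 + ((k:ℤ)-N)))
      = x ^ (N:ℕ) * p ^ ((N:ℤ) - (N:ℤ)^2) *
        ((∏ j ∈ range N, (1 + x * p ^ (2*j+2))) * (∏ j ∈ range N, (1 + x⁻¹ * p ^ (2*j)))) := by
    rw [← h4, ← h3, h5, h6]; ring
  have hne : x ^ (N:ℕ) * p ^ ((N:ℤ) - (N:ℤ)^2) ≠ 0 :=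
    mul_ne_zero (pow_ne_zero _ hx) (zpow_ne_zero _ hp0)
  exact mul_left_cancel₀ hne hmain

lemma pow_two_rewrite (i : ℕ) : (1:ℂ) - p ^ (2*i+2) = 1 + (-(p^2)) * (p^2) ^ i := by
  rw [← pow_mul]
  ring_nf

lemma norm_p_sq (hp : ‖p‖ < 1) : ‖p^2‖ < 1 := by
  rw [norm_pow]
  exact pow_lt_one₀ (norm_nonneg p) hp (by omega)

lemma multipliable_D (hp : ‖p‖ < 1) : Multipliable (fun i : ℕ => (1:ℂ) - p ^ (2*i+2)) := by
  have := multipliable_one_add (-(p^2)) (p^2) (norm_p_sq p hp)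
  exact this.congr fun i => (pow_two_rewrite p i).symm

lemma tendsto_D (hp : ‖p‖ < 1) :
    Tendsto (fun m => D p m) atTop (𝓝 (∏' i : ℕ, ((1:ℂ) - p ^ (2*i+2)))) :=
  (multipliable_D p hp).hasProd.tendsto_prod_nat

lemma tprod_D_ne_zero (hp : ‖p‖ < 1) : (∏' i : ℕ, ((1:ℂ) - p ^ (2*i+2))) ≠ 0 := by
  have hfac : ∀ i : ℕ, 1 + (-(p^2)) * (p^2) ^ i ≠ 0 := by
    intro i h
    have h2 : ‖(-(p^2)) * (p^2) ^ i‖ < 1 := by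
      have he : (-(p^2)) * (p^2) ^ i = -(p ^ (2*i+2)) := by ring
      rw [he, norm_neg, norm_pow]
      exact pow_lt_one₀ (norm_nonneg p) hp (by omega)
    have h3 : (-(p^2)) * (p^2) ^ i = -1 := by linear_combination h
    rw [h3] at h2
    simp at h2
  have := tprod_one_add_ne_zero (-(p^2)) (p^2) (norm_p_sq p hp) hfac
  rwa [tprod_congr (fun i => (pow_two_rewrite p i).symm)] at this

lemma tendsto_index (n : ℤ) : Tendsto (fun N : ℕ => ((N:ℤ) + n).toNat) atTop atTop := by
  apply tendsto_atTop.2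
  intro b
  rw [eventually_atTop]
  exact ⟨b + n.natAbs, fun N hN => by omega⟩

lemma tendsto_coeff (hp : ‖p‖ < 1) (n : ℤ) :
    Tendsto (fun N : ℕ => (if 0 ≤ (N:ℤ) + n then G p (2*N) (((N:ℤ) + n).toNat) else 0))
      atTop (𝓝 (∏' i : ℕ, ((1:ℂ) - p ^ (2*i+2)))⁻¹) := by
  set P := ∏' i : ℕ, ((1:ℂ) - p ^ (2*i+2)) with hPdef
  have hP0 : P ≠ 0 := tprod_D_ne_zero p hp
  have htwo : Tendsto (fun N : ℕ => 2*N) atTop atTop :=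
    tendsto_atTop.2 fun b => eventually_atTop.2 ⟨b, fun N hN => by omega⟩
  have hD2N : Tendsto (fun N : ℕ => D p (2*N)) atTop (𝓝 P) := (tendsto_D p hp).comp htwo
  have hDplus : Tendsto (fun N : ℕ => D p (((N:ℤ) + n).toNat)) atTop (𝓝 P) :=
    (tendsto_D p hp).comp (tendsto_index n)
  have hDminus : Tendsto (fun N : ℕ => D p (((N:ℤ) - n).toNat)) atTop (𝓝 P) :=
    (tendsto_D p hp).comp (tendsto_index (-n))
  have hlim : Tendsto (fun N : ℕ =>
      D p (2*N) * (D p (((N:ℤ) - n).toNat) * D p (((N:ℤ) + n).toNat))⁻¹) atTop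
      (𝓝 (P * (P * P)⁻¹)) :=
    hD2N.mul ((hDminus.mul hDplus).inv₀ (mul_ne_zero hP0 hP0))
  have hPP : P * (P * P)⁻¹ = P⁻¹ := by field_simp
  rw [hPP] at hlim
  apply Tendsto.congr' _ hlim
  rw [eventuallyEq_iff_exists_mem]
  refine ⟨{N | n.natAbs ≤ N}, mem_atTop n.natAbs, ?_⟩
  intro N hN
  simp only [Set.mem_setOf_eq] at hN
  have hpos : 0 ≤ (N:ℤ) + n := by omega
  dsimp only
  rw [if_pos hpos]
  set k := ((N:ℤ) + n).toNat with hk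
  have hkle : k ≤ 2*N := by omega
  have hsub : 2*N - k = ((N:ℤ) - n).toNat := by omega
  have := G_mul p (2*N) k hkle
  rw [hsub] at this
  have hne : D p (((N:ℤ) - n).toNat) * D p k ≠ 0 :=
    mul_ne_zero (D_ne_zero p hp _) (D_ne_zero p hp _)
  rw [← this, mul_inv_cancel_right₀ hne]

lemma summable_nat_aux (r c : ℝ) (h0 : 0 ≤ r) (hr : r < 1) (hc : 0 ≤ c) :
    Summable (fun m : ℕ => c ^ m * r ^ (m^2 + m)) := by
  obtain ⟨K, hK⟩ : ∃ K : ℕ, r ^ K * c ≤ 1/2 := by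
    have htend : Tendsto (fun K : ℕ => r ^ K * c) atTop (𝓝 (0 * c)) :=
      (tendsto_pow_atTop_nhds_zero_of_lt_one h0 hr).mul_const c
    rw [zero_mul] at htend
    exact (htend.eventually_le_const (by norm_num : (0:ℝ) < 1/2)).exists
  apply Summable.of_norm_bounded_eventually (g := fun m => (1/2:ℝ) ^ m)
  · exact summable_geometric_of_lt_one (by norm_num) (by norm_num)
  · rw [Nat.cofinite_eq_atTop]
    rw [eventually_atTop]
    refine ⟨K, fun m hm => ?_⟩
    have hval : c ^ m * r ^ (m^2 + m) = (r ^ (m+1) * c) ^ m := by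
      rw [mul_pow, ← pow_mul]
      ring_nf
    rw [Real.norm_eq_abs, _root_.abs_of_nonneg (by positivity : (0:ℝ) ≤ c ^ m * r ^ (m^2+m)), hval]
    apply pow_le_pow_left₀ (by positivity)
    calc r ^ (m+1) * c ≤ r ^ K * c := by
          apply mul_le_mul_of_nonneg_right _ hc
          exact pow_le_pow_of_le_one h0 hr.le (by omega)
      _ ≤ 1/2 := hK

lemma summable_bound {x : ℂ} (hp : ‖p‖ < 1) (hp0 : p ≠ 0) (hx : x ≠ 0) :
    Summable (fun n : ℤ => ‖x‖ ^ n * ‖p‖ ^ (n^2 + n)) := by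
  have hrpos : 0 < ‖p‖ := norm_pos_iff.2 hp0
  have hxpos : 0 < ‖x‖ := norm_pos_iff.2 hx
  apply Summable.of_nat_of_neg_add_one
  · apply Summable.congr (summable_nat_aux ‖p‖ ‖x‖ (norm_nonneg p) hp (norm_nonneg x))
    intro m
    have h1 : ((m:ℤ)^2 + m) = ((m^2 + m : ℕ) : ℤ) := by push_cast; ring
    rw [h1, zpow_natCast, zpow_natCast]
  · apply Summable.congr
      ((summable_nat_aux ‖p‖ ‖x‖⁻¹ (norm_nonneg p) hp (by positivity)).mul_left ‖x‖⁻¹)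
    intro m
    have h1 : ((-((m:ℤ)+1))^2 + (-((m:ℤ)+1))) = ((m^2 + m : ℕ) : ℤ) := by push_cast; ring
    rw [h1, zpow_natCast]
    have h2 : (-((m:ℤ)+1)) = -(((m+1 : ℕ)):ℤ) := by push_cast; ring
    rw [h2, zpow_neg, zpow_natCast, ← inv_pow, pow_succ]
    ring

lemma multipliable_A (hp : ‖p‖ < 1) (x : ℂ) :
    Multipliable (fun i : ℕ => 1 + x * p ^ (2*i+2)) := by
  have := multipliable_one_add (x * p^2) (p^2) (norm_p_sq p hp)
  apply this.congr
  intro i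
  rw [mul_assoc, ← pow_mul, ← pow_add]
  ring_nf

lemma multipliable_B (hp : ‖p‖ < 1) (x : ℂ) :
    Multipliable (fun i : ℕ => 1 + x * p ^ (2*i)) := by
  have := multipliable_one_add x (p^2) (norm_p_sq p hp)
  apply this.congr
  intro i
  rw [← pow_mul]

theorem core (hp : ‖p‖ < 1) (hp0 : p ≠ 0) {x : ℂ} (hx : x ≠ 0) :
    ∑' n : ℤ, x ^ n * p ^ (n^2 + n)
      = (∏' i : ℕ, ((1:ℂ) - p ^ (2*i+2))) *
        ((∏' i : ℕ, (1 + x * p ^ (2*i+2))) * (∏' i : ℕ, (1 + x⁻¹ * p ^ (2*i)))) := by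
  set P := ∏' i : ℕ, ((1:ℂ) - p ^ (2*i+2)) with hPdef
  have hP0 : P ≠ 0 := tprod_D_ne_zero p hp
  obtain ⟨M, hM, hMle⟩ := G_bound p hp
  -- dominated convergence for the sum side
  have h_sum : Tendsto (fun N : ℕ => ∑' n : ℤ, Fn p x N n) atTop
      (𝓝 (∑' n : ℤ, P⁻¹ * (x ^ n * p ^ (n^2 + n)))) := by
    apply tendsto_tsum_of_dominated_convergence
      (bound := fun n : ℤ => M * (‖x‖ ^ n * ‖p‖ ^ (n^2 + n)))
    · exact (summable_bound p hp hp0 hx).mul_left M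
    · intro n
      have := (tendsto_coeff p hp n).mul_const (x ^ n * p ^ (n^2 + n))
      apply this.congr
      intro N
      unfold Fn
      ring
    · apply Eventually.of_forall
      intro N n
      unfold Fn
      rw [norm_mul, norm_mul, norm_zpow, norm_zpow]
      rw [← mul_assoc]
      apply mul_le_mul_of_nonneg_right _ (zpow_nonneg (norm_nonneg p) _)
      apply mul_le_mul_of_nonneg_right _ (zpow_nonneg (norm_nonneg x) _)
      split
      · exact hMle _ _
      · simp [hM.le]
  -- product side
  have h_prod : Tendsto (fun N : ℕ =>
      (∏ j ∈ range N, (1 + x * p ^ (2*j+2))) * (∏ j ∈ range N, (1 + x⁻¹ * p ^ (2*j))))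
      atTop (𝓝 ((∏' i : ℕ, (1 + x * p ^ (2*i+2))) * (∏' i : ℕ, (1 + x⁻¹ * p ^ (2*i))))) :=
    ((multipliable_A p hp x).hasProd.tendsto_prod_nat).mul
      ((multipliable_B p hp x⁻¹).hasProd.tendsto_prod_nat)
  have h_eq : (fun N : ℕ => ∑' n : ℤ, Fn p x N n) = fun N =>
      (∏ j ∈ range N, (1 + x * p ^ (2*j+2))) * (∏ j ∈ range N, (1 + x⁻¹ * p ^ (2*j))) :=
    funext fun N => finite_id p hp0 hx N
  rw [h_eq] at h_sum
  have huniq := tendsto_nhds_unique h_sum h_prod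
  rw [tsum_mul_left] at huniq
  rw [← huniq]
  field_simp

end JTP

open Complex JTP Finset Filter Topology in
set_option maxHeartbeats 2000000 in
/-- The Jacobi triple product identity for Jacobi's theta function: for `τ ∈ ℍ`,
`w ∈ ℂ`, `q = e^{2πiτ}`, `ζ = e^{2πiw}`:
`Σ_{n ∈ 1/2+ℤ} e^{πin²τ + 2πin(w+1/2)}
  = -i q^{1/8} ζ^{-1/2} ∏_{n≥1} (1-q^n)(1-ζq^{n-1})(1-ζ⁻¹q^n)`,
where `q^{1/8} = e^{πiτ/4}` and `ζ^{-1/2} = e^{-πiw}`. -/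
theorem jacobi_triple_product_theta (τ w : ℂ) (hτ : 0 < τ.im) :
    ∑' n : ℤ, Complex.exp
        (Real.pi * I * (n + 1 / 2) ^ 2 * τ + 2 * Real.pi * I * (n + 1 / 2) * (w + 1 / 2)) =
      -I * Complex.exp (Real.pi * I * τ / 4) * Complex.exp (-(Real.pi * I * w)) *
        ∏' n : ℕ,
          ((1 - Complex.exp (2 * Real.pi * I * τ) ^ (n + 1)) *
            (1 - Complex.exp (2 * Real.pi * I * w) * Complex.exp (2 * Real.pi * I * τ) ^ n) *
            (1 - (Complex.exp (2 * Real.pi * I * w))⁻¹ *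
              Complex.exp (2 * Real.pi * I * τ) ^ (n + 1))) := by
  set p : ℂ := Complex.exp (Real.pi * I * τ) with hpdef
  set Q : ℂ := Complex.exp (2 * Real.pi * I * τ) with hQdef
  set ζ : ℂ := Complex.exp (2 * Real.pi * I * w) with hζdef
  set E : ℂ := Complex.exp (Real.pi * I * τ / 4) with hEdef
  clear_value p Q ζ E
  have hp0 : p ≠ 0 := by rw [hpdef]; exact Complex.exp_ne_zero _
  have hζ0 : ζ ≠ 0 := by rw [hζdef]; exact Complex.exp_ne_zero _
  have hx : (-ζ) ≠ 0 := neg_ne_zero.2 hζ0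
  have hp : ‖p‖ < 1 := by
    rw [hpdef, Complex.norm_exp]
    apply Real.exp_lt_one_iff.2
    have hre : ((Real.pi : ℂ) * I * τ).re = -(Real.pi * τ.im) := by
      simp [Complex.mul_re, Complex.mul_im, Complex.I_re, Complex.I_im,
        Complex.ofReal_re, Complex.ofReal_im]
    rw [hre]
    nlinarith [Real.pi_pos]
  have hQ : ∀ n : ℕ, p ^ (2*n) = Q ^ n := by
    intro n
    rw [hpdef, hQdef, ← Complex.exp_nat_mul, ← Complex.exp_nat_mul]
    congr 1
    push_cast
    ring
  have hQ2 : ∀ n : ℕ, p ^ (2*n+2) = Q ^ (n+1) := by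
    intro n
    have h := hQ (n+1)
    rw [show 2*(n+1) = 2*n+2 by omega] at h
    exact h
  -- termwise identification of the theta series
  have key : ∀ n : ℤ, Complex.exp
        (Real.pi * I * (n + 1 / 2) ^ 2 * τ + 2 * Real.pi * I * (n + 1 / 2) * (w + 1 / 2))
      = (I * E * Complex.exp (Real.pi * I * w)) * ((-ζ) ^ n * p ^ (n^2 + n)) := by
    intro n
    have harg : Real.pi * I * (n + 1 / 2) ^ 2 * τ + 2 * Real.pi * I * (n + 1 / 2) * (w + 1 / 2)
        = (((Real.pi * I * τ / 4 + Real.pi * I * w) + Real.pi * I / 2)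
            + ((n^2 + n : ℤ) : ℂ) * (Real.pi * I * τ)) + ((n : ℤ) : ℂ) * (2 * Real.pi * I * w + Real.pi * I) := by
      push_cast
      ring
    rw [harg, Complex.exp_add, Complex.exp_add, Complex.exp_add, Complex.exp_add]
    rw [Complex.exp_int_mul, Complex.exp_int_mul]
    have h1 : Complex.exp (Real.pi * I / 2) = I := by
      have h := Complex.exp_mul_I (Real.pi / 2 : ℂ)
      have h2 : (Real.pi : ℂ) * I / 2 = (Real.pi / 2 : ℂ) * I := by ring
      rw [h2, h]
      have hc : Complex.cos (Real.pi / 2 : ℂ) = 0 := by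
        rw [show ((Real.pi : ℂ) / 2) = ((Real.pi / 2 : ℝ) : ℂ) by push_cast; ring,
          ← Complex.ofReal_cos, Real.cos_pi_div_two]
        simp
      have hs : Complex.sin (Real.pi / 2 : ℂ) = 1 := by
        rw [show ((Real.pi : ℂ) / 2) = ((Real.pi / 2 : ℝ) : ℂ) by push_cast; ring,
          ← Complex.ofReal_sin, Real.sin_pi_div_two]
        simp
      rw [hc, hs, one_mul, zero_add]
    have h2 : Complex.exp (2 * Real.pi * I * w + Real.pi * I) = -ζ := by
      rw [Complex.exp_add, hζdef]
      have : Complex.exp ((Real.pi : ℂ) * I) = -1 := Complex.exp_pi_mul_I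
      rw [this]
      ring
    rw [h1, h2, hpdef]
    rw [hEdef]
    ring
  -- multipliability of the three factors
  have hC : Multipliable (fun n : ℕ => 1 - Q ^ (n+1)) := by
    apply (multipliable_D p hp).congr
    intro i
    rw [hQ2]
  have hA' : Multipliable (fun n : ℕ => 1 - ζ * Q ^ n) := by
    apply (multipliable_B p hp (-ζ)).congr
    intro i
    rw [hQ]
    ring
  have hB' : Multipliable (fun n : ℕ => 1 - ζ⁻¹ * Q ^ (n+1)) := by
    apply (multipliable_A p hp (-ζ⁻¹)).congr
    intro i
    rw [hQ2]
    ring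
  -- split the triple product
  have hsplit : (∏' n : ℕ, ((1 - Q ^ (n+1)) * (1 - ζ * Q ^ n) * (1 - ζ⁻¹ * Q ^ (n+1))))
      = (∏' n : ℕ, (1 - Q ^ (n+1))) * (∏' n : ℕ, (1 - ζ * Q ^ n))
        * (∏' n : ℕ, (1 - ζ⁻¹ * Q ^ (n+1))) := by
    rw [Multipliable.tprod_mul (hC.mul hA') hB', Multipliable.tprod_mul hC hA']
  -- shifts
  have hshift1 : (∏' n : ℕ, (1 - ζ * Q ^ n))
      = (1 - ζ) * ∏' n : ℕ, (1 - ζ * Q ^ (n+1)) := by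
    have hA'' : Multipliable (fun n : ℕ => 1 - ζ * Q ^ (n+1)) := by
      apply (multipliable_A p hp (-ζ)).congr
      intro i
      rw [hQ2]
      ring
    rw [tprod_eq_zero_mul' hA'']
    simp
  have hshift2 : (∏' n : ℕ, (1 + (-ζ)⁻¹ * p ^ (2*n)))
      = (1 - ζ⁻¹) * ∏' n : ℕ, (1 - ζ⁻¹ * Q ^ (n+1)) := by
    have hmB : Multipliable (fun n : ℕ => 1 + (-ζ)⁻¹ * p ^ (2*(n+1))) := by
      apply (multipliable_A p hp (-ζ)⁻¹).congr
      intro i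
      rw [show 2*(i+1) = 2*i+2 by omega]
    rw [tprod_eq_zero_mul' hmB]
    congr 1
    · simp [inv_neg, sub_eq_add_neg]
    · apply tprod_congr
      intro n
      rw [hQ (n+1), inv_neg]
      ring
  -- the core identity
  have hcore := core p hp hp0 hx
  -- identify the three tprods in the core with the shifted ones
  have hid1 : (∏' i : ℕ, ((1:ℂ) - p ^ (2*i+2))) = ∏' n : ℕ, (1 - Q ^ (n+1)) :=
    tprod_congr fun i => by rw [hQ2]
  have hid2 : (∏' i : ℕ, (1 + (-ζ) * p ^ (2*i+2))) = ∏' n : ℕ, (1 - ζ * Q ^ (n+1)) :=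
    tprod_congr fun i => by rw [hQ2]; ring
  rw [hid1, hid2, hshift2] at hcore
  -- assemble
  calc ∑' n : ℤ, Complex.exp
        (Real.pi * I * (n + 1 / 2) ^ 2 * τ + 2 * Real.pi * I * (n + 1 / 2) * (w + 1 / 2))
      = ∑' n : ℤ, (I * E * Complex.exp (Real.pi * I * w)) * ((-ζ) ^ n * p ^ (n^2 + n)) :=
        tsum_congr key
    _ = (I * E * Complex.exp (Real.pi * I * w)) * ∑' n : ℤ, ((-ζ) ^ n * p ^ (n^2 + n)) :=
        tsum_mul_left
    _ = (I * E * Complex.exp (Real.pi * I * w)) * ((∏' n : ℕ, (1 - Q ^ (n+1))) *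
          ((∏' n : ℕ, (1 - ζ * Q ^ (n+1))) * ((1 - ζ⁻¹) * ∏' n : ℕ, (1 - ζ⁻¹ * Q ^ (n+1))))) := by
        rw [hcore]
    _ = -I * E * Complex.exp (-(Real.pi * I * w)) *
        ∏' n : ℕ, ((1 - Q ^ (n+1)) * (1 - ζ * Q ^ n) * (1 - ζ⁻¹ * Q ^ (n+1))) := by
        rw [hsplit, hshift1]
        have hsc : I * Complex.exp (Real.pi * I * w) * (1 - ζ⁻¹)
            = -I * Complex.exp (-(Real.pi * I * w)) * (1 - ζ) := by
          rw [hζdef, ← Complex.exp_neg]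
          have e1 : Complex.exp ((Real.pi : ℂ) * I * w) * Complex.exp (-(2 * Real.pi * I * w))
              = Complex.exp (-(Real.pi * I * w)) := by
            rw [← Complex.exp_add]; congr 1; ring
          have e2 : Complex.exp (-((Real.pi : ℂ) * I * w)) * Complex.exp (2 * Real.pi * I * w)
              = Complex.exp (Real.pi * I * w) := by
            rw [← Complex.exp_add]; congr 1; ring
          linear_combination (-I) * e1 + (-I) * e2
        linear_combination (E * (∏' n : ℕ, (1 - Q ^ (n+1))) * (∏' n : ℕ, (1 - ζ * Q ^ (n+1)))
          * (∏' n : ℕ, (1 - ζ⁻¹ * Q ^ (n+1)))) * hsc
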